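/- Let A be a unital C*-algebra, B a commutative unital C*-algebra, φ : A → B a positive contractive linear map, and f a convex function on an open interval I containing 0 with f(0) ≤ 0. Then for every self-adjoint a ∈ A with spectrum in I, f(φ(a)) ≤ φ(f(a)). -/

import Mathlib

open scoped ComplexOrder

/-- A convex function on an open set has a supporting line at each point. -/
lemma exists_support_line' {I : Set ℝ} (hI : IsOpen I) {f : ℝ → ℝ} (hf : ConvexOn ℝ I f)
    {x₀ : ℝ} (hx₀ : x₀ ∈ I) : ∃ c : ℝ, ∀ y ∈ I, f x₀ + c * (y - x₀) ≤ f y := by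
  obtain ⟨ε, hε, hball⟩ := Metric.isOpen_iff.mp hI x₀ hx₀
  have hl : x₀ - ε / 2 ∈ I := hball (by
    rw [Metric.mem_ball, Real.dist_eq, abs_lt]; constructor <;> linarith)
  have hr : x₀ + ε / 2 ∈ I := hball (by
    rw [Metric.mem_ball, Real.dist_eq, abs_lt]; constructor <;> linarith)
  set S : Set ℝ := (fun y => (f x₀ - f y) / (x₀ - y)) '' (I ∩ Set.Iio x₀) with hS
  have hne : S.Nonempty := ⟨_, ⟨x₀ - ε / 2, ⟨hl, by simp; linarith⟩, rfl⟩⟩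
  have hbdd : BddAbove S := by
    refine ⟨(f (x₀ + ε / 2) - f x₀) / (x₀ + ε / 2 - x₀), ?_⟩
    rintro _ ⟨y, ⟨hy, hy2⟩, rfl⟩
    exact hf.slope_mono_adjacent hy hr hy2 (by linarith)
  refine ⟨sSup S, fun y hy => ?_⟩
  rcases lt_trichotomy y x₀ with h | h | h
  · have h1 : (f x₀ - f y) / (x₀ - y) ≤ sSup S := le_csSup hbdd ⟨y, ⟨hy, h⟩, rfl⟩
    have h2 := (div_le_iff₀ (by linarith : (0:ℝ) < x₀ - y)).mp h1
    nlinarith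
  · simp [h]
  · have h2 : sSup S ≤ (f y - f x₀) / (y - x₀) := by
      refine csSup_le hne ?_
      rintro _ ⟨w, ⟨hw, hw2⟩, rfl⟩
      exact hf.slope_mono_adjacent hw hy hw2 h
    have h3 := (le_div_iff₀ (by linarith : (0:ℝ) < y - x₀)).mp h2
    nlinarith

lemma key_jensen' {A : Type*} [CStarAlgebra A] [PartialOrder A] [StarOrderedRing A]
    (ψ : A →ₗ[ℂ] ℂ) (hψ_pos : ∀ x : A, 0 ≤ x → 0 ≤ ψ x) (hψ1 : ψ 1 ≤ 1)
    {I : Set ℝ} (hI_open : IsOpen I) (hI_conn : I.OrdConnected)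
    {f : ℝ → ℝ} (hf : ConvexOn ℝ I f) (h0I : (0 : ℝ) ∈ I) (hf0 : f 0 ≤ 0)
    (a : A) (ha : IsSelfAdjoint a) (hspec : spectrum ℝ a ⊆ I) :
    ∃ x₀ ∈ I, ψ a = (x₀ : ℂ) ∧ f x₀ ≤ (ψ (cfc f a)).re := by
  have hmono : ∀ x y : A, x ≤ y → ψ x ≤ ψ y := fun x y h => by
    have := hψ_pos _ (sub_nonneg.mpr h)
    rw [map_sub] at this
    exact sub_nonneg.mp this
  have hsmul : ∀ (r : ℝ) (x : A), ψ (r • x) = (r : ℂ) * ψ x := fun r x => by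
    rw [show r • x = (algebraMap ℝ ℂ r) • x from (algebraMap_smul ℂ r x).symm, map_smul,
      smul_eq_mul]; rfl
  have ht0 : 0 ≤ ψ 1 := hψ_pos 1 zero_le_one
  set t : ℂ := ψ 1 with htdef
  have htim : t.im = 0 := ((Complex.le_def.mp ht0).2).symm
  set tr : ℝ := t.re with htr
  have htr0 : 0 ≤ tr := (Complex.le_def.mp ht0).1
  have htr1 : tr ≤ 1 := by simpa using (Complex.le_def.mp hψ1).1
  -- x₀ exists and lies in I
  have main : ∃ x₀ ∈ I, ψ a = (x₀ : ℂ) := by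
    rcases subsingleton_or_nontrivial A with hA | hA
    · refine ⟨0, h0I, ?_⟩
      rw [Subsingleton.elim a 0, map_zero]; simp
    · have hcpt : IsCompact (spectrum ℝ a) := spectrum.isCompact a
      have hne : (spectrum ℝ a).Nonempty :=
        ContinuousFunctionalCalculus.spectrum_nonempty (R := ℝ) a ha
      set m := sInf (spectrum ℝ a) with hm
      set M := sSup (spectrum ℝ a) with hM
      have hmI : m ∈ I := hspec (hcpt.sInf_mem hne)
      have hMI : M ∈ I := hspec (hcpt.sSup_mem hne)
      have hle1 : algebraMap ℝ A m ≤ a := by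
        calc algebraMap ℝ A m = cfc (fun _ : ℝ => m) a := (cfc_const m a ha).symm
          _ ≤ cfc (fun x : ℝ => x) a :=
              cfc_mono (fun x hx => csInf_le hcpt.bddBelow hx)
          _ = a := cfc_id' ℝ a ha
      have hle2 : a ≤ algebraMap ℝ A M := by
        calc a = cfc (fun x : ℝ => x) a := (cfc_id' ℝ a ha).symm
          _ ≤ cfc (fun _ : ℝ => M) a :=
              cfc_mono (fun x hx => le_csSup hcpt.bddAbove hx)
          _ = algebraMap ℝ A M := cfc_const M a ha
      have h1 : (m : ℂ) * t ≤ ψ a := by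
        have := hmono _ _ hle1
        rwa [Algebra.algebraMap_eq_smul_one, hsmul] at this
      have h2 : ψ a ≤ (M : ℂ) * t := by
        have := hmono _ _ hle2
        rwa [Algebra.algebraMap_eq_smul_one, hsmul] at this
      have him : (ψ a).im = 0 := by
        have := (Complex.le_def.mp h1).2
        simpa [Complex.mul_im, htim] using this.symm
      have hre1 : m * tr ≤ (ψ a).re := by
        have := (Complex.le_def.mp h1).1
        simpa [Complex.mul_re, htim] using this
      have hre2 : (ψ a).re ≤ M * tr := by
        have := (Complex.le_def.mp h2).1
        simpa [Complex.mul_re, htim] using this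
      have hmtI : m * tr ∈ I := by
        rcases le_or_gt 0 m with h | h
        · exact hI_conn.out h0I hmI ⟨mul_nonneg h htr0, by nlinarith⟩
        · exact hI_conn.out hmI h0I ⟨by nlinarith, by nlinarith⟩
      have hMtI : M * tr ∈ I := by
        rcases le_or_gt 0 M with h | h
        · exact hI_conn.out h0I hMI ⟨mul_nonneg h htr0, by nlinarith⟩
        · exact hI_conn.out hMI h0I ⟨by nlinarith, by nlinarith⟩
      exact ⟨(ψ a).re, hI_conn.out hmtI hMtI ⟨hre1, hre2⟩,
        Complex.ext (by simp) (by simp [him])⟩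
  obtain ⟨x₀, hx₀I, hx₀⟩ := main
  refine ⟨x₀, hx₀I, hx₀, ?_⟩
  obtain ⟨c, hc⟩ := exists_support_line' hI_open hf hx₀I
  have hfI : ContinuousOn f I := hf.continuousOn hI_open
  have hfa : ContinuousOn f (spectrum ℝ a) := hfI.mono hspec
  have hg_le : cfc (fun y : ℝ => (f x₀ - c * x₀) + c * y) a ≤ cfc f a :=
    cfc_mono (fun x hx => by have := hc x (hspec hx); linarith) (by fun_prop) hfa
  have hcfc_eq : cfc (fun y : ℝ => (f x₀ - c * x₀) + c * y) a
      = algebraMap ℝ A (f x₀ - c * x₀) + c • a := by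
    rw [cfc_const_add _ _ _ (by fun_prop) ha, cfc_const_mul c (fun y : ℝ => y) a,
      cfc_id' ℝ a ha]
  have hkey := hmono _ _ hg_le
  rw [hcfc_eq, map_add, Algebra.algebraMap_eq_smul_one, hsmul, hsmul, hx₀] at hkey
  have hre := (Complex.le_def.mp hkey).1
  have hlhs : (((f x₀ - c * x₀ : ℝ) : ℂ) * t + (c : ℂ) * (x₀ : ℂ)).re
      = (f x₀ - c * x₀) * tr + c * x₀ := by
    simp [Complex.mul_re, Complex.add_re, htim, htr]
  rw [hlhs] at hre
  have hs : f x₀ - c * x₀ ≤ f 0 := by have := hc 0 h0I; linarith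
  nlinarith
/-- Jensen's inequality for a positive *contractive* map `φ : A → B` into a commutative
unital C*-algebra `B`, for a convex function `f` on an open interval `I` containing `0`
with `f 0 ≤ 0`.  (For a positive map, contractivity is equivalent to `φ 1 ≤ 1`.) -/
theorem jensen_commutative_codomain_contractive {A B : Type*}
    [CStarAlgebra A] [PartialOrder A] [StarOrderedRing A]
    [CommCStarAlgebra B] [PartialOrder B] [StarOrderedRing B]
    (φ : A →ₗ[ℂ] B) (hφ_pos : ∀ x : A, 0 ≤ x → 0 ≤ φ x) (hφ_contr : φ 1 ≤ 1)
    (I : Set ℝ) (hI_open : IsOpen I) (hI_conn : I.OrdConnected)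
    (f : ℝ → ℝ) (hf : ConvexOn ℝ I f) (h0I : (0 : ℝ) ∈ I) (hf0 : f 0 ≤ 0)
    (a : A) (ha : IsSelfAdjoint a) (hspec : spectrum ℝ a ⊆ I) :
    cfc f (φ a) ≤ φ (cfc f a) := by
  rcases subsingleton_or_nontrivial B with hB | hB
  · exact le_of_eq (Subsingleton.elim _ _)
  -- characters of B are positive
  have hχ_pos : ∀ (χ : WeakDual.characterSpace ℂ B) (b : B), 0 ≤ b → 0 ≤ χ b := by
    intro χ b hb
    have h1 : star (CFC.sqrt b) * CFC.sqrt b = b := by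
      rw [(IsSelfAdjoint.of_nonneg (CFC.sqrt_nonneg b)).star_eq, CFC.sqrt_mul_sqrt_self b hb]
    rw [← h1, map_mul, map_star]
    exact star_mul_self_nonneg _
  -- the key fact per character
  have hchar : ∀ χ : WeakDual.characterSpace ℂ B,
      ∃ x₀ ∈ I, χ (φ a) = (x₀ : ℂ) ∧ f x₀ ≤ (χ (φ (cfc f a))).re := by
    intro χ
    set ψ : A →ₗ[ℂ] ℂ :=
      { toFun := fun x => χ (φ x)
        map_add' := fun x y => by simp [map_add]
        map_smul' := fun r x => by simp [map_smul] } with hψdef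
    have hψ_pos : ∀ x : A, 0 ≤ x → 0 ≤ ψ x := fun x hx => hχ_pos χ _ (hφ_pos x hx)
    have hψ1 : ψ 1 ≤ 1 := by
      have h := hχ_pos χ _ (sub_nonneg.mpr hφ_contr)
      rw [map_sub, map_one] at h
      simpa [hψdef] using sub_nonneg.mp h
    exact key_jensen' ψ hψ_pos hψ1 hI_open hI_conn hf h0I hf0 a ha hspec
  -- φ maps selfadjoint elements to selfadjoint elements
  have hφ_sa : ∀ x : A, IsSelfAdjoint x → IsSelfAdjoint (φ x) := by
    intro x hx
    have h2 : φ x = φ (x⁺) - φ (x⁻) := by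
      rw [← map_sub, CFC.posPart_sub_negPart x hx]
    rw [h2]
    exact ((hφ_pos _ (CFC.posPart_nonneg x)).isSelfAdjoint).sub
      ((hφ_pos _ (CFC.negPart_nonneg x)).isSelfAdjoint)
  have hb_sa : IsSelfAdjoint (φ a) := hφ_sa a ha
  -- spectrum of φ a is contained in I
  have hspecb : spectrum ℝ (φ a) ⊆ I := by
    intro x hx
    have hx' : algebraMap ℝ ℂ x ∈ spectrum ℂ (φ a) := spectrum.algebraMap_mem ℂ hx
    obtain ⟨χ, hχ⟩ := WeakDual.CharacterSpace.mem_spectrum_iff_exists.mp hx'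
    obtain ⟨x₀, hx₀I, heq, -⟩ := hchar χ
    rw [hχ] at heq
    have hxx : x = x₀ := by rw [show algebraMap ℝ ℂ x = (x:ℂ) from rfl] at heq; exact_mod_cast heq
    exact hxx ▸ hx₀I
  have hfI : ContinuousOn f I := hf.continuousOn hI_open
  have hfb : ContinuousOn f (spectrum ℝ (φ a)) := hfI.mono hspecb
  -- reduce to nonnegativity of the difference
  rw [← sub_nonneg]
  have hd_sa : IsSelfAdjoint (φ (cfc f a) - cfc f (φ a)) :=
    (hφ_sa _ (cfc_predicate f a)).sub (cfc_predicate f (φ a))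
  refine (StarOrderedRing.nonneg_iff_spectrum_nonneg (R := ℝ) _ hd_sa).mpr ?_
  intro x hx
  have hx' : algebraMap ℝ ℂ x ∈ spectrum ℂ (φ (cfc f a) - cfc f (φ a)) :=
    spectrum.algebraMap_mem ℂ hx
  obtain ⟨χ, hχ⟩ := WeakDual.CharacterSpace.mem_spectrum_iff_exists.mp hx'
  obtain ⟨x₀, hx₀I, heq, hle⟩ := hchar χ
  have hsa' : IsSelfAdjoint (χ (φ a) : ℂ) := by
    rw [heq]; exact Complex.conj_ofReal x₀
  have hmap : χ (cfc f (φ a)) = algebraMap ℝ ℂ (f x₀) := by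
    rw [StarAlgHomClass.map_cfc (S := ℂ) χ f (φ a) hfb (map_continuous χ) hb_sa hsa', heq,
      show ((x₀ : ℂ)) = algebraMap ℝ ℂ x₀ from rfl, cfc_algebraMap x₀ f]
  rw [map_sub, hmap] at hχ
  have hre := congrArg Complex.re hχ
  simp only [Complex.sub_re, Complex.ofReal_re, Complex.ofReal_re] at hre
  have : (χ (φ (cfc f a))).re - f x₀ = x := by simpa using hre
  linarith
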